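/- Let X be a first countable Hausdorff space, (x_n) a sequence in X, and I_φ an analytic P-ideal given by a lower semicontinuous submeasure φ with φ(ℕ) < ∞. Then the set of I_φ-limit points of (x_n) is an F_σ subset of X. -/

import Mathlib

open Filter Topology Set
open scoped ENNReal

/-- An ideal on ℕ: contains all finite sets, closed under subsets and finite
unions, and proper. -/
def IsIdeal (I : Set (Set ℕ)) : Prop :=
  (∀ A : Set ℕ, A.Finite → A ∈ I) ∧
  (∀ A B : Set ℕ, A ⊆ B → B ∈ I → A ∈ I) ∧
  (∀ A B : Set ℕ, A ∈ I → B ∈ I → A ∪ B ∈ I) ∧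
  (Set.univ : Set ℕ) ∉ I

/-- `ℓ` is an `I`-limit point of `x`: some subsequence indexed by a set not in
`I` converges to `ℓ`. -/
def ILimitPoint {X : Type*} [TopologicalSpace X] (I : Set (Set ℕ)) (x : ℕ → X) (ℓ : X) : Prop :=
  ∃ A : Set ℕ, A ∉ I ∧ Tendsto x (atTop ⊓ 𝓟 A) (𝓝 ℓ)

/-- `ℓ` is an `I`-cluster point of `x`. -/
def IClusterPoint {X : Type*} [TopologicalSpace X] (I : Set (Set ℕ)) (x : ℕ → X) (ℓ : X) : Prop :=
  ∀ U ∈ 𝓝 ℓ, {n | x n ∈ U} ∉ I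

/-- A lower semicontinuous submeasure on ℕ. -/
def IsLSCSubmeasure (φ : Set ℕ → ℝ≥0∞) : Prop :=
  φ ∅ = 0 ∧ (∀ A B : Set ℕ, A ⊆ B → φ A ≤ φ B) ∧
  (∀ A B : Set ℕ, φ (A ∪ B) ≤ φ A + φ B) ∧
  (∀ A : Set ℕ, Tendsto (fun n => φ (A ∩ Set.Iio n)) atTop (𝓝 (φ A)))

/-- `‖A‖_φ = lim_n φ(A \ {0,…,n-1})`, the limit of an antitone sequence,
realized as an infimum. -/
noncomputable def phiNorm (φ : Set ℕ → ℝ≥0∞) (A : Set ℕ) : ℝ≥0∞ :=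
  ⨅ n : ℕ, φ (A \ Set.Iio n)

/-- The ideal of sets of asymptotic density zero. -/
def I0 : Set (Set ℕ) :=
  {S : Set ℕ | Tendsto (fun n => (Nat.card ↥(S ∩ Set.Iio n) : ℝ) / n) atTop (𝓝 0)}

/-- `u(ℓ) := lim_k ‖{n : x n ∈ U_k}‖_φ` along a decreasing local base at `ℓ`;
its value is independent of the base and equals the infimum over all
neighborhoods. -/
noncomputable def uFun {X : Type*} [TopologicalSpace X] (φ : Set ℕ → ℝ≥0∞)
    (x : ℕ → X) (ℓ : X) : ℝ≥0∞ :=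
  ⨅ U ∈ 𝓝 ℓ, phiNorm φ {n | x n ∈ U}

/-- Isolated points of a set. -/
def isolatedPts {X : Type*} [TopologicalSpace X] (B : Set X) : Set X :=
  {b ∈ B | ∃ U ∈ 𝓝 b, U ∩ B = {b}}


private lemma key {X : Type*} [TopologicalSpace X] [FirstCountableTopology X]
    (x : ℕ → X) (φ : Set ℕ → ℝ≥0∞) (hφ : IsLSCSubmeasure φ)
    (δ : ℝ≥0∞) (hδ0 : δ ≠ 0) (hδt : δ ≠ ⊤) (ℓ : X)
    (hℓ : ℓ ∈ closure {ℓ' : X | ∃ A : Set ℕ, δ ≤ phiNorm φ A ∧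
      Tendsto x (atTop ⊓ 𝓟 A) (𝓝 ℓ')}) :
    ILimitPoint {A : Set ℕ | phiNorm φ A = 0} x ℓ := by
  obtain ⟨U, hU⟩ := (𝓝 ℓ).exists_antitone_basis
  set V : ℕ → Set X := fun m => interior (U m) with hV
  have hVnhds : ∀ m, V m ∈ 𝓝 ℓ := fun m =>
    interior_mem_nhds.2 (hU.toHasBasis.mem_of_mem trivial)
  have hVanti : ∀ ⦃i j : ℕ⦄, i ≤ j → V j ⊆ V i := fun i j hij =>
    interior_mono (hU.antitone hij)
  -- block lemma
  have hblock : ∀ m N₀ : ℕ, ∃ b : ℕ, N₀ < b ∧ ∃ S : Set ℕ,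
      S ⊆ {n | x n ∈ V m} ∧ S ⊆ Set.Ico N₀ b ∧ δ / 2 ≤ φ S := by
    intro m N₀
    obtain ⟨ℓ', hℓV, A, hA1, hA2⟩ := mem_closure_iff_nhds.mp hℓ (V m) (hVnhds m)
    have hev : ∀ᶠ n in atTop, n ∈ A → x n ∈ V m :=
      eventually_inf_principal.mp (hA2 (isOpen_interior.mem_nhds hℓV))
    obtain ⟨n₀, hn₀⟩ := eventually_atTop.mp hev
    set M := max n₀ N₀
    set C := A \ Set.Iio M with hC
    have hφC : δ ≤ φ C := le_trans hA1 (iInf_le _ M)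
    have hhalf : δ / 2 < δ := ENNReal.half_lt_self hδ0 hδt
    have : ∀ᶠ j in atTop, δ / 2 < φ (C ∩ Set.Iio j) :=
      (hφ.2.2.2 C).eventually (eventually_gt_nhds (lt_of_lt_of_le hhalf hφC))
    obtain ⟨j, hj⟩ := this.exists
    refine ⟨max (N₀ + 1) j, lt_of_lt_of_le (Nat.lt_succ_self _) (le_max_left _ _),
      C ∩ Set.Iio j, ?_, ?_, hj.le⟩
    · rintro n ⟨⟨hnA, hnM⟩, -⟩
      exact hn₀ n (le_trans (le_max_left _ _) (not_lt.mp hnM)) hnA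
    · rintro n ⟨⟨hnA, hnM⟩, hnj⟩
      exact ⟨le_trans (le_max_right _ _) (not_lt.mp hnM),
        lt_of_lt_of_le hnj (le_max_right _ _)⟩
  choose b hb S hS1 hS2 hS3 using hblock
  -- recursive bounds
  set N : ℕ → ℕ := fun m => Nat.rec 0 (fun m' N' => b m' N') m with hN
  have hNsucc : ∀ m, N (m + 1) = b m (N m) := fun m => rfl
  have hNmono : StrictMono N := strictMono_nat_of_lt_succ (fun m => hb m (N m))
  set A : Set ℕ := ⋃ m, S m (N m) with hA
  have hsub : ∀ n : ℕ, S n (N n) ⊆ A \ Set.Iio n := by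
    intro n k hk
    refine ⟨Set.mem_iUnion.mpr ⟨n, hk⟩, ?_⟩
    have := (hS2 n (N n) hk).1
    exact not_lt.mpr (le_trans (le_trans hNmono.le_apply this) le_rfl)
  have hnorm : δ / 2 ≤ phiNorm φ A := by
    refine le_iInf fun n => le_trans (hS3 n (N n)) (hφ.2.1 _ _ (hsub n))
  refine ⟨A, ?_, ?_⟩
  · intro h
    simp only [Set.mem_setOf_eq] at h
    rw [show phiNorm φ A = 0 from h] at hnorm
    exact (ENNReal.div_eq_zero_iff.mp (le_antisymm hnorm zero_le)).elim
      hδ0 (fun h2 => by norm_num at h2)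
  · rw [tendsto_iff_forall_eventually_mem]
    intro W hW
    obtain ⟨m, -, hm⟩ := hU.toHasBasis.mem_iff.mp hW
    rw [eventually_inf_principal]
    filter_upwards [eventually_ge_atTop (N m)] with n hn hnA
    obtain ⟨j, hj⟩ := Set.mem_iUnion.mp hnA
    have hjm : m ≤ j := by
      by_contra hlt
      push_neg at hlt
      have : n < N m := lt_of_lt_of_le (hS2 j (N j) hj).2
        (by rw [← hNsucc]; exact hNmono.monotone hlt)
      omega
    exact hm (interior_subset (hVanti hjm (hS1 j (N j) hj)))

theorem stmt6 {X : Type*} [TopologicalSpace X] [FirstCountableTopology X]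
    [T2Space X] (x : ℕ → X) (φ : Set ℕ → ℝ≥0∞) (hφ : IsLSCSubmeasure φ)
    (hfin : φ Set.univ < ⊤) :
    ∃ F : ℕ → Set X, (∀ n, IsClosed (F n)) ∧
      {ℓ : X | ILimitPoint {A : Set ℕ | phiNorm φ A = 0} x ℓ} = ⋃ n, F n := by
  refine ⟨fun k => closure {ℓ' : X | ∃ A : Set ℕ,
      ((k : ℝ≥0∞) + 1)⁻¹ ≤ phiNorm φ A ∧ Tendsto x (atTop ⊓ 𝓟 A) (𝓝 ℓ')},
    fun k => isClosed_closure, ?_⟩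
  ext ℓ
  simp only [Set.mem_setOf_eq, Set.mem_iUnion]
  constructor
  · rintro ⟨A, hA, hT⟩
    simp only [Set.mem_setOf_eq] at hA
    obtain ⟨n, hn⟩ := ENNReal.exists_inv_nat_lt hA
    refine ⟨n, subset_closure ⟨A, ?_, hT⟩⟩
    refine le_trans (ENNReal.inv_le_inv.mpr ?_) hn.le
    exact le_self_add
  · rintro ⟨k, hk⟩
    exact key x φ hφ ((k : ℝ≥0∞) + 1)⁻¹
      (ENNReal.inv_ne_zero.mpr (by simp))
      (ENNReal.inv_ne_top.mpr (by simp)) ℓ hk
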